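/- Let H be a complex Hilbert space, let (φ_j)_{j∈ι} be a Hilbert basis of H, and let T be a compact linear operator on H with T φ_j = λ_j φ_j for every j, where λ_j ∈ ℂ. Let S be a compact linear operator on H with ‖T − S‖ > 0. Then the spectrum of S is contained in the union of the open balls of radius 2‖T − S‖ centered at the eigenvalues: σ(S) ⊆ ⋃_{j∈ι} { z ∈ ℂ : |z − λ_j| < 2‖T − S‖ }. (Theorem 4.6 of the paper, stated abstractly: σ(T_t) ⊂ ⋃_n B(λ_n, 2‖T − T_t‖).) -/

import Mathlib

open scoped InnerProductSpace ComplexConjugate ENNReal NNReal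

section Aux

variable {H : Type*} [NormedAddCommGroup H] [InnerProductSpace ℂ H] [CompleteSpace H]
  {ι : Type*}

private lemma lp_norm_sq (g : lp (fun _ : ι => ℂ) 2) :
    ‖g‖ ^ 2 = ∑' j, ‖g j‖ ^ 2 := by
  have h := lp.norm_rpow_eq_tsum (p := 2) (by norm_num) g
  have h2 : ((2 : ℝ≥0∞).toReal) = ((2 : ℕ) : ℝ) := by norm_num
  rw [h2] at h
  simpa [Real.rpow_natCast] using h

private lemma lp_summable_sq (g : lp (fun _ : ι => ℂ) 2) :
    Summable fun j => ‖g j‖ ^ 2 := by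
  have h := (lp.memℓp g).summable (p := 2) (by norm_num)
  have h2 : ((2 : ℝ≥0∞).toReal) = ((2 : ℕ) : ℝ) := by norm_num
  rw [h2] at h
  simpa [Real.rpow_natCast] using h

/-- Lower bound for an operator whose coefficients on a Hilbert basis are multiplication
by a sequence bounded below. -/
private lemma coeff_lower_bound (φ : HilbertBasis ι ℂ H) (A : H →L[ℂ] H) (μ : ι → ℂ)
    (h : ∀ x j, ⟪φ j, A x⟫_ℂ = μ j * ⟪φ j, x⟫_ℂ)
    {c : ℝ} (hc0 : 0 ≤ c) (hc : ∀ j, c ≤ ‖μ j‖) (x : H) :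
    c * ‖x‖ ≤ ‖A x‖ := by
  set f := φ.repr x with hf
  set g := φ.repr (A x) with hg
  have hrepr : ∀ j, g j = μ j * f j := by
    intro j
    rw [hg, hf, φ.repr_apply_apply, φ.repr_apply_apply, h]
  have hsq : (c * ‖x‖) ^ 2 ≤ ‖A x‖ ^ 2 := by
    have hxf : ‖x‖ = ‖f‖ := (φ.repr.norm_map x).symm
    have hAg : ‖A x‖ = ‖g‖ := (φ.repr.norm_map (A x)).symm
    rw [hxf, hAg, lp_norm_sq g, mul_pow, lp_norm_sq f, ← tsum_mul_left]
    refine Summable.tsum_le_tsum ?_ ?_ (lp_summable_sq g)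
    · intro j
      rw [hrepr j, norm_mul, mul_pow]
      exact mul_le_mul_of_nonneg_right
        (pow_le_pow_left₀ hc0 (hc j) 2) (by positivity)
    · exact (lp_summable_sq f).mul_left _
  have h1 : 0 ≤ c * ‖x‖ := by positivity
  exact (pow_le_pow_iff_left₀ h1 (norm_nonneg _) two_ne_zero).mp hsq

/-- Coefficients of a diagonal operator. -/
private lemma diag_coeff (φ : HilbertBasis ι ℂ H) (T : H →L[ℂ] H) (l : ι → ℂ)
    (hT : ∀ j, T (φ j) = l j • φ j) (x : H) (j : ι) :
    ⟪φ j, T x⟫_ℂ = l j * ⟪φ j, x⟫_ℂ := by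
  have h1 : HasSum (fun i => φ.repr x i • φ i) x := φ.hasSum_repr x
  classical
  set F : H →L[ℂ] ℂ := innerSL ℂ (φ j) with hF
  have h2 : HasSum (fun i => F.comp T (φ.repr x i • φ i)) (F.comp T x) :=
    (F.comp T).hasSum h1
  have h3 : (fun i => F.comp T (φ.repr x i • φ i))
      = fun i => if i = j then l j * φ.repr x j else 0 := by
    funext i
    rw [ContinuousLinearMap.comp_apply, map_smul]
    have hFdef : ∀ w : H, F w = ⟪φ j, w⟫_ℂ := fun w => rfl
    rw [ContinuousLinearMap.map_smul, hFdef, hT i, inner_smul_right,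
      orthonormal_iff_ite.mp φ.orthonormal j i]
    by_cases hij : i = j
    · subst hij; simp [smul_eq_mul]; ring
    · simp [hij, Ne.symm hij]
  rw [h3] at h2
  have h4 : F.comp T x = l j * φ.repr x j :=
    h2.unique (hasSum_ite_eq j _)
  have h5 : F.comp T x = ⟪φ j, T x⟫_ℂ := rfl
  rw [← h5, h4, φ.repr_apply_apply]

end Aux

/-- Theorem 4.6 (abstract form): if `T` is a compact operator diagonalized by a Hilbert
basis with eigenvalues `λ_j` and `S` is a compact operator with `‖T - S‖ > 0`, then the
spectrum of `S` is contained in the union of the open balls `B(λ_j, 2‖T - S‖)`. -/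
theorem spectrum_subset_union_balls
    {H : Type*} [NormedAddCommGroup H] [InnerProductSpace ℂ H] [CompleteSpace H]
    {ι : Type*} [Nonempty ι] (φ : HilbertBasis ι ℂ H)
    (T : H →L[ℂ] H) (hTc : IsCompactOperator (⇑T))
    (l : ι → ℂ) (hT : ∀ j, T (φ j) = l j • φ j)
    (S : H →L[ℂ] H) (hS : IsCompactOperator (⇑S))
    (hpos : 0 < ‖T - S‖) :
    spectrum ℂ S ⊆ ⋃ j, {z : ℂ | ‖z - l j‖ < 2 * ‖T - S‖} := by
  intro z hz
  by_contra hmem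
  simp only [Set.mem_iUnion, Set.mem_setOf_eq, not_exists, not_lt] at hmem
  set ε := ‖T - S‖ with hε
  have hfar : ∀ j, 2 * ε ≤ ‖z - l j‖ := by
    intro j
    simpa using hmem j
  set A : H →L[ℂ] H := z • (1 : H →L[ℂ] H) - S with hA
  set B : H →L[ℂ] H := z • (1 : H →L[ℂ] H) - T with hB
  have hAB : A = B + (T - S) := by
    rw [hA, hB]; abel
  -- lower bound for B
  have hBlb : ∀ x, 2 * ε * ‖x‖ ≤ ‖B x‖ := by
    refine coeff_lower_bound φ B (fun j => z - l j) ?_ (by positivity) hfar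
    intro x j
    simp only [hB, ContinuousLinearMap.sub_apply, ContinuousLinearMap.smul_apply,
      ContinuousLinearMap.one_apply, inner_sub_right, inner_smul_right,
      diag_coeff φ T l hT x j]
    ring
  -- lower bound for A
  have hAlb : ∀ x, ε * ‖x‖ ≤ ‖A x‖ := by
    intro x
    have h1 : ‖(T - S) x‖ ≤ ε * ‖x‖ := (T - S).le_opNorm x
    have h2 : ‖B x‖ ≤ ‖A x‖ + ‖(T - S) x‖ := by
      have : B x = A x - (T - S) x := by rw [hAB]; simp
      calc ‖B x‖ = ‖A x - (T - S) x‖ := by rw [this]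
        _ ≤ ‖A x‖ + ‖(T - S) x‖ := norm_sub_le _ _
    have := hBlb x
    linarith
  -- adjoint of B is also diagonal
  have hBadj : ∀ x, 2 * ε * ‖x‖ ≤ ‖(ContinuousLinearMap.adjoint B) x‖ := by
    refine coeff_lower_bound φ _ (fun j => (starRingEnd ℂ) (z - l j)) ?_ (by positivity) ?_
    · intro x j
      rw [ContinuousLinearMap.adjoint_inner_right]
      simp only [hB, ContinuousLinearMap.sub_apply, ContinuousLinearMap.smul_apply,
        ContinuousLinearMap.one_apply, hT j]
      rw [inner_sub_left, inner_smul_left, inner_smul_left, map_sub]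
      ring
    · intro j
      rw [RCLike.norm_conj]
      exact hfar j
  -- lower bound for adjoint of A
  have hAadjlb : ∀ x, ε * ‖x‖ ≤ ‖(ContinuousLinearMap.adjoint A) x‖ := by
    intro x
    have hadd : ContinuousLinearMap.adjoint A
        = ContinuousLinearMap.adjoint B + ContinuousLinearMap.adjoint (T - S) := by
      rw [hAB, map_add]
    have hnorm : ‖ContinuousLinearMap.adjoint (T - S)‖ = ε := by
      rw [hε]; exact (ContinuousLinearMap.adjoint : (H →L[ℂ] H) ≃ₗᵢ⋆[ℂ] (H →L[ℂ] H)).norm_map _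
    have h1 : ‖(ContinuousLinearMap.adjoint (T - S)) x‖ ≤ ε * ‖x‖ := by
      calc ‖(ContinuousLinearMap.adjoint (T - S)) x‖
          ≤ ‖ContinuousLinearMap.adjoint (T - S)‖ * ‖x‖ :=
            (ContinuousLinearMap.adjoint (T - S)).le_opNorm x
        _ = ε * ‖x‖ := by rw [hnorm]
    have h2 : ‖(ContinuousLinearMap.adjoint B) x‖
        ≤ ‖(ContinuousLinearMap.adjoint A) x‖ + ‖(ContinuousLinearMap.adjoint (T - S)) x‖ := by
      have hBx : (ContinuousLinearMap.adjoint B) x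
          = (ContinuousLinearMap.adjoint A) x - (ContinuousLinearMap.adjoint (T - S)) x := by
        rw [hadd]; simp
      rw [hBx]
      exact norm_sub_le _ _
    have := hBadj x
    linarith
  -- A is antilipschitz
  have hanti : AntilipschitzWith (ε.toNNReal)⁻¹ A := by
    refine ContinuousLinearMap.antilipschitz_of_bound A ?_
    intro x
    rw [NNReal.coe_inv, Real.coe_toNNReal _ hpos.le]
    calc ‖x‖ ≤ ‖A x‖ / ε := by
          rw [le_div_iff₀ hpos]; linarith [hAlb x]
      _ = ε⁻¹ * ‖A x‖ := by ring
  -- dense range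
  have hdense : (LinearMap.range (A : H →ₗ[ℂ] H)).topologicalClosure = ⊤ := by
    rw [Submodule.topologicalClosure_eq_top_iff]
    rw [Submodule.eq_bot_iff]
    intro x hx
    have hAax : (ContinuousLinearMap.adjoint A) x = 0 := by
      have h0 : ⟪A ((ContinuousLinearMap.adjoint A) x), x⟫_ℂ = 0 :=
        hx _ (LinearMap.mem_range_self _ _)
      have h1 : ⟪(ContinuousLinearMap.adjoint A) x, (ContinuousLinearMap.adjoint A) x⟫_ℂ = 0 := by
        rw [ContinuousLinearMap.adjoint_inner_left, ← inner_conj_symm, h0, map_zero]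
      exact inner_self_eq_zero.mp h1
    have := hAadjlb x
    rw [hAax, norm_zero] at this
    have hx0 : ‖x‖ ≤ 0 := by nlinarith [norm_nonneg x]
    exact norm_le_zero_iff.mp hx0
  -- A is bijective, hence a unit, contradiction
  have hbij : Function.Bijective A :=
    (ContinuousLinearMap.bijective_iff_dense_range_and_antilipschitz A).mpr
      ⟨hdense, _, hanti⟩
  have hunit : IsUnit A := ContinuousLinearMap.isUnit_iff_bijective.mpr hbij
  have : IsUnit (algebraMap ℂ (H →L[ℂ] H) z - S) := by
    rwa [Algebra.algebraMap_eq_smul_one]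
  exact spectrum.mem_iff.mp hz this
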